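/- Let f ∈ ℤ[X] be monic of degree 2g (g ≥ 1), all of whose roots in ℂ have absolute value q, and assume f has no real roots. Then 0 < f(q) ≤ q^g · (4q − 1)^g. Equivalently, writing f(X) = ∏_{i=1}^{2g}(X − α_i) over ℂ, one has ∏_{i=1}^{2g}(1 − α_i/q) ≤ (4 − 1/q)^g. -/

import Mathlib

open Polynomial


lemma prod_le_avg_pow {n : ℕ} (hn : n ≠ 0) (t : Fin n → ℝ) (ht : ∀ i, 0 ≤ t i) :
    ∏ i, t i ≤ ((∑ i, t i) / n) ^ n := by
  have hn' : (0:ℝ) < n := by positivity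
  have h := Real.geom_mean_le_arith_mean_weighted Finset.univ (fun _ => (n:ℝ)⁻¹) t
    (fun i _ => by positivity) (by simp [Finset.card_univ]; field_simp) (fun i _ => ht i)
  rw [Real.finset_prod_rpow _ _ (fun i _ => ht i)] at h
  have hsum : ∑ i, (n:ℝ)⁻¹ * t i = (∑ i, t i) / n := by
    rw [← Finset.mul_sum]; ring
  rw [hsum] at h
  have hP : (0:ℝ) ≤ ∏ i, t i := Finset.prod_nonneg fun i _ => ht i
  calc ∏ i, t i = ((∏ i, t i) ^ ((n:ℝ)⁻¹)) ^ n := by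
        rw [← Real.rpow_natCast (_ ^ _) n, ← Real.rpow_mul hP]
        field_simp
        simp
      _ ≤ ((∑ i, t i) / n) ^ n := by
        apply pow_le_pow_left₀ (Real.rpow_nonneg hP _) h

lemma amgm_aux {n : ℕ} (hn : n ≠ 0) (C r : ℝ) (hr : 0 ≤ r) (s : Fin n → ℝ)
    (h0 : ∀ i, 0 ≤ s i) (hC : ∀ i, s i ≤ C) (hprod : r ^ n ≤ ∏ i, s i) :
    ∏ i, (C - s i) ≤ (C - r) ^ n := by
  have hn' : (0:ℝ) < n := by positivity
  set m : ℝ := (∑ i, s i) / n with hm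
  have hm0 : 0 ≤ m := by
    apply div_nonneg (Finset.sum_nonneg fun i _ => h0 i) hn'.le
  have hrm : r ≤ m := by
    have h1 : r ^ n ≤ m ^ n := le_trans hprod (prod_le_avg_pow hn s h0)
    exact le_of_pow_le_pow_left₀ hn hm0 h1
  have hmC : m ≤ C := by
    rw [hm, div_le_iff₀ hn']
    calc ∑ i, s i ≤ ∑ _i : Fin n, C := Finset.sum_le_sum fun i _ => hC i
      _ = C * n := by simp [mul_comm]
  have h2 : ∏ i, (C - s i) ≤ ((∑ i, (C - s i)) / n) ^ n :=
    prod_le_avg_pow hn _ (fun i => sub_nonneg.2 (hC i))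
  have h3 : (∑ i, (C - s i)) / n = C - m := by
    rw [Finset.sum_sub_distrib, hm]
    field_simp
    rw [Finset.sum_const, Finset.card_univ, Fintype.card_fin, nsmul_eq_mul]
  rw [h3] at h2
  exact le_trans h2 (pow_le_pow_left₀ (sub_nonneg.2 hmC) (by linarith) n)


lemma listProdMap {α M : Type*} [CommMonoid M] (L : List α) (f : α → M) :
    (L.map f).prod = ∏ i : Fin L.length, f (L.get i) := by
  conv_lhs => rw [← List.ofFn_get L, List.map_ofFn, List.prod_ofFn]
  rfl

/-- If `f ∈ ℤ[X]` is monic of degree `2g`, all complex roots of `f` have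
absolute value `q`, and `f` has no real roots, then `0 < f(q) ≤ q^g (4q - 1)^g`. -/
theorem weil_poly_l_value_bound (q : ℕ) (hq : IsPrimePow q) (g : ℕ) (hg : 1 ≤ g)
    (f : Polynomial ℤ) (hmonic : f.Monic) (hdeg : f.natDegree = 2 * g)
    (habs : ∀ z : ℂ, Polynomial.aeval z f = 0 → ‖z‖ = q)
    (hreal : ∀ x : ℝ, Polynomial.aeval x f ≠ 0) :
    0 < f.eval (q : ℤ) ∧ f.eval (q : ℤ) ≤ (q : ℤ) ^ g * (4 * q - 1) ^ g := by
  have hq2 : 2 ≤ q := hq.two_le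
  have hqR : (1:ℝ) ≤ q := by exact_mod_cast Nat.one_le_of_lt hq2
  set F : Polynomial ℂ := f.map (algebraMap ℤ ℂ) with hFdef
  have hFm : F.Monic := hmonic.map _
  have hF0 : F ≠ 0 := hFm.ne_zero
  have hFdeg : F.natDegree = 2 * g := by
    rw [hFdef, hmonic.natDegree_map]; exact hdeg
  have hsplit : F.Splits := IsAlgClosed.splits _
  have hcard : Multiset.card F.roots = 2 * g := by
    rw [← hFdeg]; exact (splits_iff_card_roots).mp hsplit
  obtain ⟨L, hL0⟩ := Quotient.exists_rep F.roots
  have hL : (L : Multiset ℂ) = F.roots := hL0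
  set n := L.length with hndef
  have hn : n = 2 * g := by
    rw [hndef, ← Multiset.coe_card, hL, hcard]
  have hn0 : n ≠ 0 := by omega
  set z : Fin n → ℂ := L.get with hzdef
  have hzR : ∀ i, aeval (z i) f = 0 := by
    intro i
    have hmem : z i ∈ F.roots := by
      rw [← hL]
      exact List.get_mem L i
    have hroot := (mem_roots hF0).mp hmem
    rw [aeval_def, ← eval_map, ← hFdef]
    exact hroot
  have habs' : ∀ i, ‖z i‖ = q := fun i => habs _ (hzR i)
  -- evaluation as product over roots
  have heval : ∀ c : ℂ, F.eval c = ∏ i, (c - z i) := by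
    intro c
    conv_lhs => rw [hsplit.eq_prod_roots_of_monic hFm]
    rw [eval_multiset_prod, ← hL]
    rw [show (Multiset.map (eval c) (Multiset.map (fun a => X - C a) (L : Multiset ℂ))) =
        ((L.map fun a => c - a : List ℂ) : Multiset ℂ) by
      simp [Multiset.map_coe, List.map_map, Function.comp_def]]
    rw [Multiset.prod_coe, listProdMap]
  have hevalcast : ∀ m : ℤ, ((f.eval m : ℤ) : ℂ) = ∏ i, ((m : ℂ) - z i) := by
    intro m
    rw [← heval]
    rw [hFdef, eval_intCast_map (algebraMap ℤ ℂ) f m]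
    simp [eq_intCast]
  set A : ℤ := f.eval (q : ℤ) with hAdef
  set B : ℤ := f.eval (-(q : ℤ)) with hBdef
  set s : Fin n → ℝ := fun i => Complex.normSq ((q : ℂ) + z i) with hsdef
  have hnormSq : ∀ i, Complex.normSq (z i) = (q:ℝ)^2 := by
    intro i
    rw [← Complex.sq_norm, habs' i]
  have hs0 : ∀ i, 0 ≤ s i := fun i => Complex.normSq_nonneg _
  have hsC : ∀ i, s i ≤ 4 * (q:ℝ)^2 := by
    intro i
    have h1 : ‖(q:ℂ) + z i‖ ≤ ‖(q:ℂ)‖ + ‖z i‖ :=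
      norm_add_le _ _
    have h2 : ‖((q:ℂ) : ℂ)‖ = q := by
      simp [Complex.norm_natCast]
    rw [h2, habs' i] at h1
    have h3 : s i = ‖(q:ℂ) + z i‖ ^ 2 := (Complex.sq_norm _).symm
    rw [h3]
    nlinarith [norm_nonneg ((q:ℂ) + z i)]
  have hsub : ∀ i, Complex.normSq ((q : ℂ) - z i) = 4 * (q:ℝ)^2 - s i := by
    intro i
    have := hnormSq i
    rw [hsdef]
    simp only [Complex.normSq_apply, Complex.add_re, Complex.sub_re, Complex.add_im,
      Complex.sub_im, Complex.natCast_re, Complex.natCast_im] at *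
    nlinarith [this]
  have hA2 : (A:ℝ)^2 = ∏ i, (4 * (q:ℝ)^2 - s i) := by
    have h1 : ((A:ℤ):ℂ) = ∏ i, ((q : ℂ) - z i) := by
      rw [hAdef]
      have := hevalcast (q : ℤ)
      push_cast at this ⊢
      exact this
    have h2 : Complex.normSq ((A:ℤ):ℂ) = ∏ i, Complex.normSq ((q : ℂ) - z i) := by
      rw [h1, map_prod]
    rw [Complex.normSq_intCast] at h2
    push_cast at h2
    calc (A:ℝ)^2 = (A:ℝ) * (A:ℝ) := sq (A:ℝ)
      _ = ∏ i, Complex.normSq ((q : ℂ) - z i) := h2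
      _ = ∏ i, (4 * (q:ℝ)^2 - s i) := Finset.prod_congr rfl fun i _ => hsub i
  have hB2 : (B:ℝ)^2 = ∏ i, s i := by
    have h1 : ((B:ℤ):ℂ) = ∏ i, (-(q : ℂ) - z i) := by
      rw [hBdef]
      have := hevalcast (-(q : ℤ))
      push_cast at this ⊢
      exact this
    have h2 : Complex.normSq ((B:ℤ):ℂ) = ∏ i, Complex.normSq (-(q : ℂ) - z i) := by
      rw [h1, map_prod]
    rw [Complex.normSq_intCast] at h2
    push_cast at h2
    calc (B:ℝ)^2 = (B:ℝ) * (B:ℝ) := sq (B:ℝ)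
      _ = ∏ i, Complex.normSq (-(q : ℂ) - z i) := h2
      _ = ∏ i, s i := by
          apply Finset.prod_congr rfl
          intro i _
          rw [show -(q:ℂ) - z i = -((q:ℂ) + z i) by ring, Complex.normSq_neg]
  have hever : ∀ m : ℤ, f.eval m ≠ 0 := by
    intro m hm
    apply hreal ((m : ℤ) : ℝ)
    rw [aeval_def, eval₂_at_intCast]
    simp [Int.cast_id, hm]
  have hintz : ∀ i, IsIntegral ℤ (z i) := by
    intro i
    exact ⟨f, hmonic, by rw [← aeval_def]; exact hzR i⟩
  have hconj_root : ∀ i, aeval ((starRingEnd ℂ) (z i)) f = 0 := by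
    intro i
    have h := aeval_algHom_apply ((starRingEnd ℂ).toIntAlgHom) (z i) f
    rw [hzR i, map_zero] at h
    simpa using h
  have hintzc : ∀ i, IsIntegral ℤ ((starRingEnd ℂ) (z i)) := by
    intro i
    exact ⟨f, hmonic, by rw [← aeval_def]; exact hconj_root i⟩
  set N : ℂ := ∏ i, (2*(q:ℂ) + z i + (starRingEnd ℂ) (z i)) with hNdef
  have hNint : IsIntegral ℤ N := by
    have : N ∈ integralClosure ℤ ℂ := by
      apply Subalgebra.prod_mem
      intro i _
      refine add_mem (add_mem ?_ (hintz i)) (hintzc i)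
      have h2q : ((2*q:ℕ):ℂ) ∈ integralClosure ℤ ℂ := Subalgebra.natCast_mem _ _
      have : ((2*q:ℕ):ℂ) = 2*(q:ℂ) := by push_cast; ring
      rwa [this] at h2q
    exact this
  have hBN : ((B:ℤ):ℂ)^2 = (q:ℂ)^n * N := by
    have h1 : ((B:ℤ):ℂ) = ∏ i, (-(q : ℂ) - z i) := by
      rw [hBdef]
      have := hevalcast (-(q : ℤ))
      push_cast at this ⊢
      exact this
    have hc : (starRingEnd ℂ) ((B:ℤ):ℂ) = ((B:ℤ):ℂ) := by simp
    calc ((B:ℤ):ℂ)^2 = ((B:ℤ):ℂ) * (starRingEnd ℂ) ((B:ℤ):ℂ) := by rw [hc, sq]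
      _ = (∏ i, (-(q : ℂ) - z i)) * ∏ i, (-(q : ℂ) - (starRingEnd ℂ) (z i)) := by
          rw [h1, map_prod]
          simp
      _ = ∏ i, ((-(q : ℂ) - z i) * (-(q : ℂ) - (starRingEnd ℂ) (z i))) := by
          rw [Finset.prod_mul_distrib]
      _ = ∏ i, ((q:ℂ) * (2*(q:ℂ) + z i + (starRingEnd ℂ) (z i))) := by
          apply Finset.prod_congr rfl
          intro i _
          have hmc : z i * (starRingEnd ℂ) (z i) = (q:ℂ)^2 := by
            rw [Complex.mul_conj, hnormSq i]
            push_cast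
            ring
          linear_combination hmc
      _ = (q:ℂ)^n * N := by
          rw [Finset.prod_mul_distrib, hNdef, Finset.prod_const, Finset.card_univ,
            Fintype.card_fin]
  have hqC : ((q:ℂ)) ≠ 0 := by
    exact_mod_cast Nat.cast_ne_zero.mpr (by omega)
  have hNrat : N = algebraMap ℚ ℂ ((B:ℚ)^2 / (q:ℚ)^n) := by
    have h2 : algebraMap ℚ ℂ ((B:ℚ)^2 / (q:ℚ)^n) = ((B:ℤ):ℂ)^2 / (q:ℂ)^n := by
      push_cast
      simp
    rw [h2, hBN]
    field_simp
  have hNintQ : IsIntegral ℤ ((B:ℚ)^2/(q:ℚ)^n) := by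
    rw [hNrat] at hNint
    exact (isIntegral_algebraMap_iff (algebraMap ℚ ℂ).injective).mp hNint
  obtain ⟨m, hm⟩ := IsIntegrallyClosed.isIntegral_iff.mp hNintQ
  have hqQ : ((q:ℚ))^n ≠ 0 := by
    apply pow_ne_zero
    exact_mod_cast Nat.cast_ne_zero.mpr (by omega)
  have hBm : ((B:ℚ))^2 = (q:ℚ)^n * m := by
    rw [eq_intCast] at hm
    rw [hm]
    field_simp
  have hBZ : B^2 = (q:ℤ)^n * m := by exact_mod_cast hBm
  have hBne : B ≠ 0 := hever _
  have hBgeq : ((q:ℤ))^n ≤ B^2 := by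
    have hB2pos : 0 < B^2 := by positivity
    have hqn : (0:ℤ) < (q:ℤ)^n := by positivity
    have hmpos : 0 < m := by nlinarith
    nlinarith
  -- AM-GM
  have hprodge : (q:ℝ)^n ≤ ∏ i, s i := by
    rw [← hB2]
    exact_mod_cast hBgeq
  have hkey : (A:ℝ)^2 ≤ (4*(q:ℝ)^2 - q)^n := by
    rw [hA2]
    exact amgm_aux hn0 _ _ (by positivity) s hs0 hsC hprodge
  -- positivity of A
  set FR : Polynomial ℝ := f.map (algebraMap ℤ ℝ) with hFRdef
  have hFRm : FR.Monic := hmonic.map _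
  have hFRdeg : 0 < FR.degree := by
    rw [Polynomial.natDegree_pos_iff_degree_pos.symm, hFRdef, hmonic.natDegree_map, hdeg]
    omega
  have htend := Polynomial.tendsto_atTop_of_leadingCoeff_nonneg FR hFRdeg
    (by rw [hFRm.leadingCoeff]; norm_num)
  have hnoroot : ∀ x : ℝ, FR.eval x ≠ 0 := by
    intro x hx
    apply hreal x
    rw [aeval_def, ← eval_map]
    exact hx
  have hAq : FR.eval ((q:ℤ):ℝ) = (A:ℝ) := by
    rw [hFRdef, eval_intCast_map (algebraMap ℤ ℝ) f (q:ℤ)]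
    simp [hAdef, eq_intCast]
  have hApos : 0 < (A:ℝ) := by
    rcases ((htend.eventually_gt_atTop 0).and (Filter.eventually_ge_atTop ((q:ℤ):ℝ))).exists
      with ⟨M, hM0, hMq⟩
    by_contra hc
    push_neg at hc
    have hAne : (A:ℝ) ≠ 0 := by exact_mod_cast hever (q:ℤ)
    have hAneg : (A:ℝ) < 0 := lt_of_le_of_ne hc hAne
    have hcont : ContinuousOn (fun x => FR.eval x) (Set.Icc ((q:ℤ):ℝ) M) :=
      (FR.continuous).continuousOn
    have h0mem : (0:ℝ) ∈ Set.Icc (FR.eval ((q:ℤ):ℝ)) (FR.eval M) := by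
      rw [hAq]
      exact ⟨hAneg.le, hM0.le⟩
    obtain ⟨x, _, hx⟩ := intermediate_value_Icc hMq hcont h0mem
    exact hnoroot x hx
  have hT : (4*(q:ℝ)^2 - q)^n = (((q:ℝ) * (4*q - 1))^g)^2 := by
    have hbase : 4*(q:ℝ)^2 - (q:ℝ) = (q:ℝ)*(4*(q:ℝ)-1) := by ring
    rw [hn, hbase, mul_comm 2 g, pow_mul]
  have hTnn : (0:ℝ) ≤ ((q:ℝ) * (4*q - 1))^g := by
    have h1 : (0:ℝ) ≤ 4*(q:ℝ)-1 := by linarith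
    positivity
  have hfinal : (A:ℝ) ≤ ((q:ℝ) * (4*q - 1))^g := by
    rw [hT] at hkey
    exact le_of_pow_le_pow_left₀ (by norm_num) hTnn hkey
  constructor
  · exact_mod_cast hApos
  · rw [mul_pow] at hfinal
    exact_mod_cast hfinal
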